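/- Section coding preserves linear ordering: define Y ⊆ [ω × ω]^ω by: y ∈ Y iff for every n ≥ 1, the n-th vertical section y_n equals y_0 \ y_0(n) or y_0 \ y_0(n+1) (as sets, where y_0(k) denotes the k-th element of y_0), where y_0 is infinite. If x, y ∈ Y with x_0 ⊊* y_0, then x ⊆* y (as subsets of ω × ω). Consequently, if the set of first sections {y_0 : y ∈ Y} is linearly ordered by ⊆*, then Y is linearly ordered by ⊆*. -/

import Mathlib

def AlmostSub (a b : Set ℕ) : Prop := (a \ b).Finite

def AlmostSubP (a b : Set (ℕ × ℕ)) : Prop := (a \ b).Finite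

/-- The `n`-th vertical section of `y ⊆ ω × ω`. -/
def vsec (y : Set (ℕ × ℕ)) (n : ℕ) : Set ℕ := {m | (n, m) ∈ y}

/-- `z \ z(k) = { m ∈ z : m ≥ z(k) }`, where `z(k)` is the `k`-th element of `z`. -/
def tailFrom (z : Set ℕ) (k : ℕ) : Set ℕ := {m ∈ z | Nat.nth (· ∈ z) k ≤ m}

/-- `y` is a coded element: `y_0` is infinite and each section `y_n` (`n ≥ 1`) equals
`y_0 \ y_0(n)` or `y_0 \ y_0(n+1)`. -/
def Coded (y : Set (ℕ × ℕ)) : Prop :=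
  (vsec y 0).Infinite ∧
  ∀ n ≥ 1, vsec y n = tailFrom (vsec y 0) n ∨ vsec y n = tailFrom (vsec y 0) (n + 1)

open Nat in
lemma tailFrom_mono (z : Set ℕ) (hz : z.Infinite) {j k : ℕ} (h : j ≤ k) :
    tailFrom z k ⊆ tailFrom z j := by
  intro m hm
  exact ⟨hm.1, le_trans (Nat.nth_monotone hz h) hm.2⟩

open Nat in
lemma section_coding_key (x y : Set (ℕ × ℕ)) (hx : Coded x) (hy : Coded y)
    (h1 : (vsec x 0 \ vsec y 0).Finite) (h2 : (vsec y 0 \ vsec x 0).Infinite) :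
    (x \ y).Finite := by
  classical
  set a := vsec x 0 with ha'
  set b := vsec y 0 with hb'
  have ha : a.Infinite := hx.1
  have hb : b.Infinite := hy.1
  -- bound for a \ b
  obtain ⟨B, hB⟩ := (h1.bddAbove)
  have hBmem : ∀ m, m ∈ a → m ∉ b → m ≤ B := fun m h1' h2' => hB ⟨h1', h2'⟩
  set D : Set ℕ := b \ a with hD'
  set d : ℕ := Nat.nth (· ∈ D) (B + 1) with hd'
  set N : ℕ := max (B + 1) d with hN'
  have hcount_irrel : ∀ (p : ℕ → Prop) (i1 i2 : DecidablePred p) (n : ℕ),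
      @Nat.count p i1 n = @Nat.count p i2 n := fun p i1 i2 n =>
    congrFun (congrArg (fun i => @Nat.count p i) (Subsingleton.elim i1 i2)) n
  -- key counting claim: for n ≥ N, b's (n+1)-th element ≤ a's n-th element
  have key : ∀ n, N ≤ n → Nat.nth (· ∈ b) (n + 1) ≤ Nat.nth (· ∈ a) n := by
    intro n hn
    have hna : n ≤ Nat.nth (· ∈ a) n := (Nat.nth_strictMono ha).le_apply
    have hNa : N ≤ Nat.nth (· ∈ a) n := le_trans hn hna
    set t : ℕ := Nat.nth (· ∈ a) n + 1 with ht'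
    -- count of a at t is n+1
    have hca : Nat.count (· ∈ a) t = n + 1 := Nat.count_nth_succ_of_infinite ha n
    -- count (a ∩ b) ≥ count a - (B+1)
    have hsplit : Nat.count (· ∈ a) t ≤ Nat.count (fun m => m ∈ a ∧ m ∈ b) t + (B + 1) := by
      rw [Nat.count_eq_card_filter_range, Nat.count_eq_card_filter_range]
      have hsub : (Finset.range t).filter (· ∈ a) ⊆
          ((Finset.range t).filter (fun m => m ∈ a ∧ m ∈ b)) ∪ Finset.range (B + 1) := by
        intro m hm
        simp only [Finset.mem_filter, Finset.mem_range] at hm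
        by_cases hmb : m ∈ b
        · exact Finset.mem_union_left _ (by simp [Finset.mem_filter, Finset.mem_range, hm.1, hm.2, hmb])
        · exact Finset.mem_union_right _ (by simp [Finset.mem_range, Nat.lt_succ_iff, hBmem m hm.2 hmb])
      calc ((Finset.range t).filter (· ∈ a)).card
          ≤ (((Finset.range t).filter (fun m => m ∈ a ∧ m ∈ b)) ∪ Finset.range (B + 1)).card :=
            Finset.card_le_card hsub
        _ ≤ ((Finset.range t).filter (fun m => m ∈ a ∧ m ∈ b)).card + (B + 1) := by
            refine le_trans (Finset.card_union_le _ _) ?_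
            simp
    -- count D at t ≥ B+2
    have hdt : d + 1 ≤ t := by
      have : d ≤ N := le_max_right _ _
      omega
    have hcD : B + 2 ≤ Nat.count (· ∈ D) t := by
      have h1 : Nat.count (· ∈ D) (d + 1) = B + 2 := by
        rw [hcount_irrel (· ∈ D) _ (fun _ => Classical.propDecidable _)]
        convert Nat.count_nth_succ_of_infinite (p := (· ∈ D)) h2 (B + 1)
      calc B + 2 = Nat.count (· ∈ D) (d + 1) := h1.symm
        _ ≤ Nat.count (· ∈ D) t := Nat.count_monotone _ hdt
    -- count b ≥ count (a ∩ b) + count D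
    have hcb : Nat.count (fun m => m ∈ a ∧ m ∈ b) t + Nat.count (· ∈ D) t ≤
        Nat.count (· ∈ b) t := by
      rw [Nat.count_eq_card_filter_range, Nat.count_eq_card_filter_range,
        Nat.count_eq_card_filter_range]
      rw [← Finset.card_union_of_disjoint]
      · refine Finset.card_le_card ?_
        intro m hm
        simp only [Finset.mem_union, Finset.mem_filter, Finset.mem_range, hD',
          Set.mem_diff] at hm ⊢
        rcases hm with h | h
        · exact ⟨h.1, h.2.2⟩
        · exact ⟨h.1, h.2.1⟩
      · rw [Finset.disjoint_filter]
        intro m _ hm hm2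
        exact hm2.2 hm.1
    have hfin : n + 1 < Nat.count (· ∈ b) t := by omega
    have := Nat.nth_lt_of_lt_count hfin
    omega
  -- tail inclusion
  have tailsub : ∀ n, N ≤ n → tailFrom a n ⊆ tailFrom b (n + 1) := by
    intro n hn m hm
    have hNm : N ≤ m := le_trans (le_trans hn (Nat.nth_strictMono ha).le_apply) hm.2
    have hmb : m ∈ b := by
      by_contra hmb
      have h3 := hBmem m hm.1 hmb
      have h4 : B + 1 ≤ N := le_max_left _ _
      omega
    exact ⟨hmb, le_trans (key n hn) hm.2⟩
  -- sections beyond N+1 are included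
  have secsub : ∀ n, N + 1 ≤ n → vsec x n ⊆ vsec y n := by
    intro n hn
    have hn1 : 1 ≤ n := by omega
    have hNn : N ≤ n := by omega
    have hxsub : vsec x n ⊆ tailFrom a n := by
      rcases hx.2 n hn1 with h | h
      · rw [h]
      · rw [h]; exact tailFrom_mono a ha (by omega)
    have hysub : tailFrom b (n + 1) ⊆ vsec y n := by
      rcases hy.2 n hn1 with h | h
      · rw [h]; exact tailFrom_mono b hb (by omega)
      · rw [h]
    exact fun m hm => hysub (tailsub n hNn (hxsub hm))
  -- each low section difference is finite
  have lowfin : ∀ n, (vsec x n \ vsec y n).Finite := by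
    intro n
    rcases Nat.eq_zero_or_pos n with rfl | hn
    · exact h1
    · have tdiff : ∀ k j : ℕ, (tailFrom a k \ tailFrom b j).Finite := by
        intro k j
        refine Set.Finite.subset (Set.Finite.union h1 (Set.finite_Iio (Nat.nth (· ∈ b) j))) ?_
        intro m hm
        simp only [tailFrom, Set.mem_diff, Set.mem_setOf_eq, not_and, not_le] at hm
        by_cases hmb : m ∈ b
        · exact Or.inr (hm.2 hmb)
        · exact Or.inl ⟨hm.1.1, hmb⟩
      rcases hx.2 n hn with h | h <;> rcases hy.2 n hn with h' | h' <;>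
        · rw [h, h']; exact tdiff _ _
  -- assemble
  have hsub : x \ y ⊆ ⋃ n ∈ Finset.range (N + 1), ({n} : Set ℕ) ×ˢ (vsec x n \ vsec y n) := by
    intro p hp
    have hp1 : p.1 ≤ N := by
      by_contra hgt
      exact hp.2 (secsub p.1 (by omega) hp.1)
    simp only [Set.mem_iUnion, Finset.mem_range]
    exact ⟨p.1, by omega, by
      simp only [Set.mem_prod, Set.mem_singleton_iff]
      exact ⟨trivial, hp.1, hp.2⟩⟩
  refine Set.Finite.subset ?_ hsub
  refine Set.Finite.biUnion (Finset.range (N + 1)).finite_toSet ?_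
  intro n _
  exact (Set.finite_singleton n).prod (lowfin n)

theorem section_coding_linear (Y : Set (Set (ℕ × ℕ))) (hY : ∀ y ∈ Y, Coded y) :
    (∀ x ∈ Y, ∀ y ∈ Y,
      AlmostSub (vsec x 0) (vsec y 0) → (vsec y 0 \ vsec x 0).Infinite → AlmostSubP x y) ∧
    ((∀ x ∈ Y, ∀ y ∈ Y, x = y ∨
        (AlmostSub (vsec x 0) (vsec y 0) ∧ (vsec y 0 \ vsec x 0).Infinite) ∨
        (AlmostSub (vsec y 0) (vsec x 0) ∧ (vsec x 0 \ vsec y 0).Infinite)) →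
      ∀ x ∈ Y, ∀ y ∈ Y, AlmostSubP x y ∨ AlmostSubP y x) := by
  constructor
  · intro x hx y hy h1 h2
    exact section_coding_key x y (hY x hx) (hY y hy) h1 h2
  · intro h x hx y hy
    rcases h x hx y hy with rfl | ⟨h1, h2⟩ | ⟨h1, h2⟩
    · left; simp [AlmostSubP]
    · exact Or.inl (section_coding_key x y (hY x hx) (hY y hy) h1 h2)
    · exact Or.inr (section_coding_key y x (hY y hy) (hY x hx) h1 h2)
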